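/- arXiv:2205.00436 — 3 statements merged into one kernel-verified Lean document; each statement's English description precedes it below -/
import Mathlib

section
/- If each Ai is (εi, δi)-differentially private with independent randomness, then the composed mechanism D ↦ (A1(D), …, An(D)) is (Σᵢ εᵢ, Σᵢ δᵢ)-differentially private. -/
open MeasureTheory ProbabilityTheory Real
open scoped ENNReal

def ADP {D R : Type*} [MeasurableSpace R] (N : D → D → Prop) (ε δ : ℝ)
    (A : D → MeasureTheory.Measure R) : Prop :=
  ∀ d₁ d₂, N d₁ d₂ → ∀ S : Set R, MeasurableSet S →
    A d₁ S ≤ ENNReal.ofReal (Real.exp ε) * A d₂ S + ENNReal.ofReal δ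

/-- Key lemma: if `μ S ≤ c * ν S + d` on all measurable sets, then the same bound
holds for lebesgue integrals of functions bounded by 1. -/
lemma lintegral_le_of_meas_le {α : Type*} [MeasurableSpace α] (μ ν : Measure α)
    [IsProbabilityMeasure μ] (c d : ℝ≥0∞)
    (h : ∀ S : Set α, MeasurableSet S → μ S ≤ c * ν S + d)
    (f : α → ℝ≥0∞) (hf : Measurable f) (hf1 : ∀ x, f x ≤ 1) :
    ∫⁻ x, f x ∂μ ≤ c * ∫⁻ x, f x ∂ν + d := by
  set g : α → ℝ := fun x => (f x).toReal with hg_def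
  have hg : Measurable g := hf.ennreal_toReal
  have hfg : ∀ x, ENNReal.ofReal (g x) = f x := fun x =>
    ENNReal.ofReal_toReal ((hf1 x).trans_lt ENNReal.one_lt_top).ne
  have hg1 : ∀ x, g x ≤ 1 := fun x => by
    simpa using ENNReal.toReal_mono ENNReal.one_ne_top (hf1 x)
  have layμ : ∫⁻ x, f x ∂μ = ∫⁻ t in Set.Ioi (0:ℝ), μ {a | t < g a} := by
    rw [show (∫⁻ x, f x ∂μ) = ∫⁻ x, ENNReal.ofReal (g x) ∂μ from
      lintegral_congr fun x => (hfg x).symm]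
    exact lintegral_eq_lintegral_meas_lt μ
      (Filter.Eventually.of_forall fun x => ENNReal.toReal_nonneg) hg.aemeasurable
  have layν : ∫⁻ x, f x ∂ν = ∫⁻ t in Set.Ioi (0:ℝ), ν {a | t < g a} := by
    rw [show (∫⁻ x, f x ∂ν) = ∫⁻ x, ENNReal.ofReal (g x) ∂ν from
      lintegral_congr fun x => (hfg x).symm]
    exact lintegral_eq_lintegral_meas_lt ν
      (Filter.Eventually.of_forall fun x => ENNReal.toReal_nonneg) hg.aemeasurable
  have hN_meas : Measurable fun t : ℝ => ν {a | t < g a} := by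
    apply Antitone.measurable
    intro s t hst
    exact measure_mono fun a ha => lt_of_le_of_lt hst ha
  -- split the domain
  have hsplit : ∫⁻ t in Set.Ioi (0:ℝ), μ {a | t < g a}
      = ∫⁻ t in Set.Ioc (0:ℝ) 1, μ {a | t < g a} := by
    rw [← Set.Ioc_union_Ioi_eq_Ioi (zero_le_one (α := ℝ)),
      lintegral_union measurableSet_Ioi (Set.Ioc_disjoint_Ioi le_rfl)]
    have : ∫⁻ t in Set.Ioi (1:ℝ), μ {a | t < g a} = ∫⁻ _ in Set.Ioi (1:ℝ), 0 := by
      apply setLIntegral_congr_fun measurableSet_Ioi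
      intro t ht
      have : {a | t < g a} = ∅ := by
        ext a
        simp only [Set.mem_setOf_eq, Set.mem_empty_iff_false, iff_false, not_lt]
        exact (hg1 a).trans (le_of_lt ht)
      simp [this]
    rw [this]
    simp
  have hsubν : ∫⁻ t in Set.Ioc (0:ℝ) 1, ν {a | t < g a}
      ≤ ∫⁻ t in Set.Ioi (0:ℝ), ν {a | t < g a} :=
    lintegral_mono_set Set.Ioc_subset_Ioi_self
  calc ∫⁻ x, f x ∂μ = ∫⁻ t in Set.Ioc (0:ℝ) 1, μ {a | t < g a} := by
        rw [layμ, hsplit]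
    _ ≤ ∫⁻ t in Set.Ioc (0:ℝ) 1, (c * ν {a | t < g a} + d) := by
        apply lintegral_mono
        intro t
        exact h _ (measurableSet_lt measurable_const hg)
    _ = c * (∫⁻ t in Set.Ioc (0:ℝ) 1, ν {a | t < g a}) + d := by
        rw [lintegral_add_right _ measurable_const, lintegral_const_mul c hN_meas,
          setLIntegral_const, Real.volume_Ioc]
        norm_num
    _ ≤ c * ∫⁻ x, f x ∂ν + d := by
        refine add_le_add_left (mul_le_mul_right ?_ c) d
        rw [layν]
        exact hsubν

/-- Composition of two approximate DP bounds for product measures. -/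
lemma prod_adp {α β : Type*} [MeasurableSpace α] [MeasurableSpace β]
    (μ₁ ν₁ : Measure α) (μ₂ ν₂ : Measure β)
    [IsProbabilityMeasure μ₁] [IsProbabilityMeasure ν₁]
    [IsProbabilityMeasure μ₂] [IsProbabilityMeasure ν₂]
    (c₁ c₂ d₁ d₂ : ℝ≥0∞)
    (h₁ : ∀ S : Set α, MeasurableSet S → μ₁ S ≤ c₁ * ν₁ S + d₁)
    (h₂ : ∀ S : Set β, MeasurableSet S → μ₂ S ≤ c₂ * ν₂ S + d₂)
    (S : Set (α × β)) (hS : MeasurableSet S) :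
    (μ₁.prod μ₂) S ≤ c₁ * c₂ * ((ν₁.prod ν₂) S) + (d₁ + d₂) := by
  set f : α → ℝ≥0∞ := fun x => min 1 (c₂ * ν₂ (Prod.mk x ⁻¹' S)) with hf_def
  have hf_meas : Measurable f :=
    measurable_const.min (measurable_const.mul (measurable_measure_prodMk_left hS))
  have hf1 : ∀ x, f x ≤ 1 := fun x => min_le_left _ _
  have key : ∀ x, μ₂ (Prod.mk x ⁻¹' S) ≤ f x + d₂ := by
    intro x
    have hx := h₂ (Prod.mk x ⁻¹' S) (measurable_prodMk_left hS)
    rcases le_total (c₂ * ν₂ (Prod.mk x ⁻¹' S)) 1 with hle | hle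
    · calc μ₂ (Prod.mk x ⁻¹' S) ≤ c₂ * ν₂ (Prod.mk x ⁻¹' S) + d₂ := hx
        _ = f x + d₂ := by rw [hf_def]; simp [min_eq_right hle]
    · calc μ₂ (Prod.mk x ⁻¹' S) ≤ 1 := prob_le_one
        _ = f x := by rw [hf_def]; simp [min_eq_left hle]
        _ ≤ f x + d₂ := le_self_add
  calc (μ₁.prod μ₂) S = ∫⁻ x, μ₂ (Prod.mk x ⁻¹' S) ∂μ₁ := Measure.prod_apply hS
    _ ≤ ∫⁻ x, (f x + d₂) ∂μ₁ := lintegral_mono key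
    _ = ∫⁻ x, f x ∂μ₁ + d₂ := by
        rw [lintegral_add_right _ measurable_const, lintegral_const, measure_univ, mul_one]
    _ ≤ (c₁ * ∫⁻ x, f x ∂ν₁ + d₁) + d₂ := by
        gcongr
        exact lintegral_le_of_meas_le μ₁ ν₁ c₁ d₁ h₁ f hf_meas hf1
    _ ≤ (c₁ * (c₂ * (ν₁.prod ν₂) S) + d₁) + d₂ := by
        gcongr
        have hmono : ∫⁻ x, f x ∂ν₁ ≤ ∫⁻ x, c₂ * ν₂ (Prod.mk x ⁻¹' S) ∂ν₁ :=
          lintegral_mono fun x => min_le_right _ _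
        rwa [lintegral_const_mul c₂ (measurable_measure_prodMk_left hS),
          ← Measure.prod_apply hS] at hmono
    _ = c₁ * c₂ * ((ν₁.prod ν₂) S) + (d₁ + d₂) := by ring

/-- n-fold composition for pi measures. -/
lemma pi_adp (n : ℕ) : ∀ {R : Fin n → Type u} [inst : ∀ i, MeasurableSpace (R i)]
    (μ ν : ∀ i, Measure (R i)) [∀ i, IsProbabilityMeasure (μ i)]
    [∀ i, IsProbabilityMeasure (ν i)] (c d : Fin n → ℝ≥0∞)
    (h : ∀ i, ∀ S : Set (R i), MeasurableSet S → μ i S ≤ c i * ν i S + d i)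
    (S : Set (∀ i, R i)), MeasurableSet S →
    Measure.pi μ S ≤ (∏ i, c i) * Measure.pi ν S + ∑ i, d i := by
  induction n with
  | zero =>
    intro R inst μ ν hμ hν c d h S hS
    rw [Measure.pi_of_empty μ, Measure.pi_of_empty ν]
    simp
  | succ n ih =>
    intro R inst μ ν hμ hν c d h S hS
    set e := MeasurableEquiv.piFinSuccAbove R 0 with he_def
    have hmpμ := measurePreserving_piFinSuccAbove μ 0
    have hmpν := measurePreserving_piFinSuccAbove ν 0
    have hS' : MeasurableSet (e.symm ⁻¹' S) := e.symm.measurable hS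
    have hpre : e ⁻¹' (e.symm ⁻¹' S) = S := by
      ext x; simp only [Set.mem_preimage, MeasurableEquiv.symm_apply_apply]
    have happμ : Measure.pi μ S
        = ((μ 0).prod (Measure.pi fun j => μ ((0 : Fin (n + 1)).succAbove j))) (e.symm ⁻¹' S) := by
      rw [← hmpμ.map_eq, MeasurableEquiv.map_apply, hpre]
    have happν : Measure.pi ν S
        = ((ν 0).prod (Measure.pi fun j => ν ((0 : Fin (n + 1)).succAbove j))) (e.symm ⁻¹' S) := by
      rw [← hmpν.map_eq, MeasurableEquiv.map_apply, hpre]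
    rw [happμ, happν, Fin.prod_univ_succ, Fin.sum_univ_succ]
    have hinner : ∀ T : Set (∀ j, R ((0 : Fin (n + 1)).succAbove j)), MeasurableSet T →
        (Measure.pi fun j => μ ((0 : Fin (n + 1)).succAbove j)) T
          ≤ (∏ j, c ((0 : Fin (n + 1)).succAbove j))
            * (Measure.pi fun j => ν ((0 : Fin (n + 1)).succAbove j)) T
            + ∑ j, d ((0 : Fin (n + 1)).succAbove j) :=
      ih _ _ _ _ (fun j => h _)
    have := prod_adp (μ 0) (ν 0)
      (Measure.pi fun j => μ ((0 : Fin (n + 1)).succAbove j))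
      (Measure.pi fun j => ν ((0 : Fin (n + 1)).succAbove j))
      (c 0) (∏ j, c ((0 : Fin (n + 1)).succAbove j))
      (d 0) (∑ j, d ((0 : Fin (n + 1)).succAbove j))
      (h 0) hinner (e.symm ⁻¹' S) hS'
    simpa [Fin.succAbove_zero] using this

/-- Sequential composition of n approximately DP mechanisms with independent randomness. -/
theorem adp_composition_n {D : Type*} {n : ℕ} {R : Fin n → Type*}
    [∀ i, MeasurableSpace (R i)]
    (N : D → D → Prop) (ε δ : Fin n → ℝ) (hδ : ∀ i, 0 ≤ δ i)
    (A : ∀ i, D → Measure (R i))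
    [∀ i d, IsProbabilityMeasure (A i d)]
    (hA : ∀ i, ADP N (ε i) (δ i) (A i)) :
    ADP N (∑ i, ε i) (∑ i, δ i) (fun d => Measure.pi (fun i => A i d)) := by
  intro d₁ d₂ hN S hS
  have key := pi_adp n (fun i => A i d₁) (fun i => A i d₂)
    (fun i => ENNReal.ofReal (Real.exp (ε i))) (fun i => ENNReal.ofReal (δ i))
    (fun i T hT => hA i d₁ d₂ hN T hT) S hS
  have hprod : (∏ i, ENNReal.ofReal (Real.exp (ε i)))
      = ENNReal.ofReal (Real.exp (∑ i, ε i)) := by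
    rw [Real.exp_sum, ← ENNReal.ofReal_prod_of_nonneg]
    intro i _
    exact (Real.exp_pos _).le
  have hsum : (∑ i, ENNReal.ofReal (δ i)) = ENNReal.ofReal (∑ i, δ i) := by
    rw [← ENNReal.ofReal_sum_of_nonneg fun i _ => hδ i]
  rw [hprod, hsum] at key
  exact key
end

section
/- For a real-valued query f with ℓ2-sensitivity Δ2, the Gaussian mechanism A(D) = f(D) + N(0, σ²) with σ = (Δ2/ε)·√(2·ln(1.25/δ)) satisfies (ε, δ)-differential privacy for all ε ∈ (0,1) and δ ∈ (0,1). -/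
open MeasureTheory ProbabilityTheory Real
open scoped NNReal ENNReal


lemma aux_neg (v : ℝ≥0) {s : Set ℝ} (hs : MeasurableSet s) :
    gaussianReal 0 v s = gaussianReal 0 v ((fun y => -y) ⁻¹' s) := by
  have h := gaussianReal_map_const_mul (μ := 0) (v := v) (-1)
  have hv : (NNReal.mk ((-1:ℝ)^2) (sq_nonneg _) * v : ℝ≥0) = v := by
    apply NNReal.eq; simp
  rw [hv] at h
  simp only [mul_zero] at h
  conv_lhs => rw [← h]
  rw [Measure.map_apply (by fun_prop) hs]
  congr 1
  ext x; simp [neg_one_mul]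

lemma aux_shift (μ : ℝ) (v : ℝ≥0) {s : Set ℝ} (hs : MeasurableSet s) :
    gaussianReal μ v s = gaussianReal 0 v ((fun y => y + μ) ⁻¹' s) := by
  have h := gaussianReal_map_add_const (μ := 0) (v := v) μ
  rw [zero_add] at h
  conv_lhs => rw [← h]
  rw [Measure.map_apply (measurable_add_const μ) hs]

lemma aux_half (v : ℝ≥0) (hv : v ≠ 0) : gaussianReal 0 v (Set.Ioi (0:ℝ)) = 1/2 := by
  set m := gaussianReal 0 v with hm
  have hsym : m (Set.Iio 0) = m (Set.Ioi 0) := by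
    rw [hm, aux_neg v measurableSet_Iio]
    congr 1
    ext x; simp
  have h0 : m {(0:ℝ)} = 0 := gaussianReal_absolutelyContinuous 0 hv (volume_singleton)
  have huniv : m Set.univ = 1 := measure_univ
  have hsplit : m Set.univ = m (Set.Iio 0) + m (Set.Ici 0) := by
    rw [← Set.Iio_union_Ici (a := (0:ℝ)),
      measure_union (Set.Iio_disjoint_Ici le_rfl) measurableSet_Ici]
  have hIci : m (Set.Ici (0:ℝ)) = m (Set.Ioi 0) := by
    rw [← Set.Ioi_insert, Set.insert_eq,
      measure_union (by simp) measurableSet_Ioi, h0, zero_add]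
  have key : m (Set.Ioi (0:ℝ)) + m (Set.Ioi 0) = 1 := by
    rw [← hsym] at hIci ⊢
    rw [hsym] at hIci
    rw [← huniv, hsplit, hIci, hsym]
  have hne : m (Set.Ioi (0:ℝ)) ≠ ⊤ := measure_ne_top _ _
  have := congrArg ENNReal.toReal key
  rw [ENNReal.toReal_add hne hne] at this
  simp only [ENNReal.toReal_one] at this
  have h2 : (m (Set.Ioi (0:ℝ))).toReal = 1/2 := by linarith
  rw [← ENNReal.ofReal_toReal hne, h2]
  rw [ENNReal.ofReal_div_of_pos] <;> norm_num

lemma pdf_le {v : ℝ≥0} (hv : (0:ℝ) < v) (μ₁ μ₂ c x : ℝ)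
    (h : (x - μ₂)^2 - (x - μ₁)^2 ≤ 2*v*c) :
    gaussianPDFReal μ₁ v x ≤ Real.exp c * gaussianPDFReal μ₂ v x := by
  unfold gaussianPDFReal
  rw [mul_left_comm, ← Real.exp_add]
  have hC : (0:ℝ) ≤ (Real.sqrt (2 * π * v))⁻¹ := by positivity
  refine mul_le_mul_of_nonneg_left ?_ hC
  apply Real.exp_le_exp.mpr
  have h2v : (0:ℝ) < 2*v := by positivity
  have hd : ((x-μ₂)^2 - (x-μ₁)^2)/(2*v) ≤ c := (div_le_iff₀ h2v).mpr (by linarith)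
  rw [sub_div] at hd
  rw [neg_div, neg_div]
  linarith


lemma aux_T2 {v : ℝ≥0} (hv : v ≠ 0) {t : ℝ} (ht : 0 ≤ t) :
    gaussianReal 0 v (Set.Ioi t) ≤ ENNReal.ofReal (Real.exp (-t^2/(2*v)) / 2) := by
  have hvpos : (0:ℝ) < v := by
    exact_mod_cast (zero_le (a := v)).lt_of_ne (Ne.symm hv)
  have hshift : gaussianReal t v (Set.Ioi t) = gaussianReal 0 v (Set.Ioi 0) := by
    rw [aux_shift t v measurableSet_Ioi]
    congr 1
    ext x; simp
  calc gaussianReal 0 v (Set.Ioi t)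
      = ∫⁻ x in Set.Ioi t, gaussianPDF 0 v x := gaussianReal_apply 0 hv _
    _ ≤ ∫⁻ x in Set.Ioi t, ENNReal.ofReal (Real.exp (-t^2/(2*v))) * gaussianPDF t v x := by
        refine setLIntegral_mono ((measurable_gaussianPDF t v).const_mul _) fun x hx => ?_
        rw [gaussianPDF, gaussianPDF, ← ENNReal.ofReal_mul (Real.exp_nonneg _)]
        refine ENNReal.ofReal_le_ofReal (pdf_le hvpos 0 t (-t^2/(2*v)) x ?_)
        have : 2*(v:ℝ)*(-t^2/(2*v)) = -t^2 := by field_simp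
        rw [this]
        have hxt : t < x := hx
        nlinarith
    _ = ENNReal.ofReal (Real.exp (-t^2/(2*v))) * ∫⁻ x in Set.Ioi t, gaussianPDF t v x :=
        lintegral_const_mul _ (measurable_gaussianPDF t v)
    _ = ENNReal.ofReal (Real.exp (-t^2/(2*v))) * (1/2) := by
        rw [← gaussianReal_apply t hv, hshift, aux_half v hv]
    _ = ENNReal.ofReal (Real.exp (-t^2/(2*v)) / 2) := by
        rw [ENNReal.ofReal_div_of_pos (by norm_num), ENNReal.ofReal_ofNat,
          div_eq_mul_inv, one_div]
        rw [div_eq_mul_inv]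

lemma aux_T3 {v : ℝ≥0} (hv : v ≠ 0) {t : ℝ} (ht : t ≤ 0) :
    gaussianReal 0 v (Set.Ioi t) ≤ ENNReal.ofReal (1/2 + (-t) * (Real.sqrt (2*π*v))⁻¹) := by
  have hC : (0:ℝ) ≤ (Real.sqrt (2*π*v))⁻¹ := by positivity
  have hsplit : Set.Ioi t = Set.Ioc t 0 ∪ Set.Ioi 0 := (Set.Ioc_union_Ioi_eq_Ioi ht).symm
  calc gaussianReal 0 v (Set.Ioi t)
      ≤ gaussianReal 0 v (Set.Ioc t 0) + gaussianReal 0 v (Set.Ioi 0) := by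
        rw [hsplit]; exact measure_union_le _ _
    _ ≤ ENNReal.ofReal ((-t) * (Real.sqrt (2*π*v))⁻¹) + ENNReal.ofReal (1/2) := by
        gcongr
        · calc gaussianReal 0 v (Set.Ioc t 0)
              = ∫⁻ x in Set.Ioc t 0, gaussianPDF 0 v x := gaussianReal_apply 0 hv _
            _ ≤ ∫⁻ _x in Set.Ioc t 0, ENNReal.ofReal ((Real.sqrt (2*π*v))⁻¹) := by
                refine setLIntegral_mono measurable_const fun x _ => ?_
                refine ENNReal.ofReal_le_ofReal ?_
                rw [gaussianPDFReal]
                calc (Real.sqrt (2*π*v))⁻¹ * Real.exp (-(x-0)^2/(2*v))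
                    ≤ (Real.sqrt (2*π*v))⁻¹ * 1 := by
                      refine mul_le_mul_of_nonneg_left ?_ hC
                      rw [← Real.exp_zero]
                      apply Real.exp_le_exp.mpr
                      have : (0:ℝ) < 2*v := by
                        have : (0:ℝ) < v := by
                          exact_mod_cast (zero_le (a := v)).lt_of_ne (Ne.symm hv)
                        linarith
                      apply div_nonpos_of_nonpos_of_nonneg <;> nlinarith [sq_nonneg (x-0)]
                  _ = (Real.sqrt (2*π*v))⁻¹ := mul_one _
            _ = ENNReal.ofReal ((Real.sqrt (2*π*v))⁻¹) * volume (Set.Ioc t 0) := by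
                rw [setLIntegral_const]
            _ = ENNReal.ofReal ((-t) * (Real.sqrt (2*π*v))⁻¹) := by
                rw [Real.volume_Ioc, ← ENNReal.ofReal_mul hC, zero_sub, mul_comm]
        · rw [aux_half v hv, ENNReal.ofReal_div_of_pos (by norm_num)]
          norm_num
    _ = ENNReal.ofReal (1/2 + (-t) * (Real.sqrt (2*π*v))⁻¹) := by
        rw [← ENNReal.ofReal_add (by nlinarith) (by norm_num), add_comm]

set_option maxHeartbeats 1000000 in
lemma aux_bad {ε δ Δ σ a : ℝ}
    (hε : ε ∈ Set.Ioo (0 : ℝ) 1) (hδ : δ ∈ Set.Ioo (0 : ℝ) 1) (hΔ : 0 < Δ)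
    (ha : |a| ≤ Δ)
    (hσ : σ = (Δ / ε) * Real.sqrt (2 * Real.log (1.25 / δ))) :
    gaussianReal 0 (Real.toNNReal (σ ^ 2)) {y : ℝ | 2*σ^2*ε < 2*a*y + a^2}
      ≤ ENNReal.ofReal δ := by
  obtain ⟨hε0, hε1⟩ := hε
  obtain ⟨hδ0, hδ1⟩ := hδ
  obtain ⟨L, hL⟩ : ∃ L, L = Real.log (1.25 / δ) := ⟨_, rfl⟩
  rw [← hL] at hσ
  -- L ≥ 0.2
  have hL2 : 0.2 ≤ L := by
    have h1 : Real.exp 0.2 ≤ 1.25 := by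
      have h := Real.add_one_le_exp (-0.2)
      have h2 : (0.8:ℝ) ≤ Real.exp (-0.2) := by linarith
      rw [Real.exp_neg] at h2
      have h3 := Real.exp_pos (0.2:ℝ)
      rw [le_inv_comm₀ (by norm_num) h3] at h2
      linarith [h2]
    have h4 : (1.25:ℝ) ≤ 1.25 / δ := by
      rw [le_div_iff₀ hδ0]; nlinarith
    calc (0.2:ℝ) ≤ Real.log 1.25 := by
          rw [Real.le_log_iff_exp_le (by norm_num)]; exact h1
      _ ≤ L := by rw [hL]; exact Real.log_le_log (by norm_num) h4
  have hLpos : 0 < L := by linarith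
  have hσpos : 0 < σ := by rw [hσ]; positivity
  have hσ2 : σ^2 = (Δ/ε)^2 * (2*L) := by
    rw [hσ, mul_pow, Real.sq_sqrt (by linarith)]
  have hvc : ((Real.toNNReal (σ ^ 2) : ℝ≥0) : ℝ) = σ^2 := Real.coe_toNNReal _ (sq_nonneg σ)
  have hv : Real.toNNReal (σ ^ 2) ≠ 0 := by
    intro h
    have h2 : ((Real.toNNReal (σ ^ 2) : ℝ≥0) : ℝ) = 0 := by rw [h]; simp
    rw [hvc] at h2
    nlinarith
  obtain ⟨t₀, ht₀def⟩ : ∃ t, t = σ^2*ε/Δ - Δ/2 := ⟨_, rfl⟩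
  have ht₀ : t₀ = Δ*(4*L-ε)/(2*ε) := by
    rw [ht₀def, hσ2]; field_simp; ring
  -- threshold fact
  have hthr : ∀ b : ℝ, 0 < b → b ≤ Δ → t₀ ≤ (2*σ^2*ε - b^2)/(2*b) := by
    intro b hb hbΔ
    rw [le_div_iff₀ (by linarith), ht₀def]
    have hu : σ^2*ε/Δ*Δ = σ^2*ε := div_mul_cancel₀ _ hΔ.ne'
    nlinarith [mul_nonneg (add_nonneg (by positivity : (0:ℝ) ≤ 2*(σ^2*ε/Δ)) hb.le)
      (sub_nonneg.2 hbΔ)]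
  -- reduce to Ioi t₀
  have hmain : gaussianReal 0 (Real.toNNReal (σ ^ 2)) {y : ℝ | 2*σ^2*ε < 2*a*y + a^2}
      ≤ gaussianReal 0 (Real.toNNReal (σ ^ 2)) (Set.Ioi t₀) := by
    rcases lt_trichotomy a 0 with hc | hc | hc
    · -- a < 0
      have hb0 : 0 < -a := by linarith
      have hbΔ : -a ≤ Δ := by rw [abs_of_neg hc] at ha; exact ha
      have hB : {y : ℝ | 2*σ^2*ε < 2*a*y + a^2} = Set.Iio ((2*σ^2*ε - a^2)/(2*a)) := by
        ext y
        simp only [Set.mem_setOf_eq, Set.mem_Iio]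
        rw [lt_div_iff_of_neg (by linarith)]
        constructor <;> intro <;> nlinarith
      rw [hB, aux_neg _ measurableSet_Iio]
      have hpre : (fun y : ℝ => -y) ⁻¹' Set.Iio ((2*σ^2*ε - a^2)/(2*a))
          = Set.Ioi (-((2*σ^2*ε - a^2)/(2*a))) := by
        ext y; simp only [Set.mem_preimage, Set.mem_Iio, Set.mem_Ioi]; constructor <;>
          intro <;> linarith
      rw [hpre]
      refine measure_mono (Set.Ioi_subset_Ioi ?_)
      have hane : a ≠ 0 := hc.ne
      have heq : -((2*σ^2*ε - a^2)/(2*a)) = (2*σ^2*ε - (-a)^2)/(2*(-a)) := by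
        field_simp
      rw [heq]
      exact hthr (-a) hb0 hbΔ
    · -- a = 0
      subst hc
      have hemp : {y : ℝ | 2*σ^2*ε < 2*0*y + 0^2} = (∅ : Set ℝ) := by
        ext y; simp only [Set.mem_setOf_eq, Set.mem_empty_iff_false, iff_false, not_lt]
        nlinarith
      rw [hemp]
      simp
    · -- a > 0
      have hbΔ : a ≤ Δ := by rw [abs_of_pos hc] at ha; exact ha
      have hB : {y : ℝ | 2*σ^2*ε < 2*a*y + a^2} = Set.Ioi ((2*σ^2*ε - a^2)/(2*a)) := by
        ext y
        simp only [Set.mem_setOf_eq, Set.mem_Ioi]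
        rw [div_lt_iff₀ (by linarith)]
        constructor <;> intro <;> nlinarith
      rw [hB]
      exact measure_mono (Set.Ioi_subset_Ioi (hthr a hc hbΔ))
  refine hmain.trans ?_
  -- exp(-L) = δ / 1.25
  have hexpL : Real.exp (-L) = δ / 1.25 := by
    rw [Real.exp_neg, hL, Real.exp_log (by positivity), inv_div]
  by_cases hsign : 0 ≤ t₀
  · refine (aux_T2 hv hsign).trans (ENNReal.ofReal_le_ofReal ?_)
    rw [hvc]
    have e0 : -t₀^2/(2*σ^2) = -((4*L-ε)^2/(16*L)) := by
      rw [ht₀, hσ2]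
      field_simp
      ring
    have e1 : -t₀^2/(2*σ^2) ≤ ε/2 - L := by
      rw [e0, neg_le, le_div_iff₀ (by linarith : (0:ℝ) < 16*L)]
      nlinarith [sq_nonneg ε]
    have e2 : Real.exp (ε/2) ≤ 2.5 := by
      have h1 : Real.exp (ε/2) ≤ Real.exp (1/2) := Real.exp_le_exp.mpr (by linarith)
      have h2 : Real.exp (1/2) * Real.exp (1/2) = Real.exp 1 := by
        rw [← Real.exp_add]; norm_num
      nlinarith [Real.exp_one_lt_d9, Real.exp_pos (1/2:ℝ)]
    have e3 : Real.exp (-t₀^2/(2*σ^2)) ≤ Real.exp (ε/2) * (δ/1.25) := by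
      rw [← hexpL, ← Real.exp_add]
      exact Real.exp_le_exp.mpr (by linarith)
    have e4 : Real.exp (ε/2) * (δ/1.25) ≤ 2.5 * (δ/1.25) :=
      mul_le_mul_of_nonneg_right e2 (by positivity)
    have e5 : (2.5:ℝ)*(δ/1.25) = 2*δ := by ring
    linarith
  · push_neg at hsign
    refine (aux_T3 hv hsign.le).trans (ENNReal.ofReal_le_ofReal ?_)
    rw [hvc]
    have hεL : 4*L < ε := by
      by_contra hcon
      push_neg at hcon
      have : 0 ≤ t₀ := by
        rw [ht₀]
        apply div_nonneg (mul_nonneg hΔ.le (by linarith)) (by linarith)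
      linarith
    have hδlow : (0.9375:ℝ) ≤ δ := by
      have h1 : 1 - L ≤ Real.exp (-L) := by linarith [Real.add_one_le_exp (-L)]
      rw [hexpL] at h1
      have hdd : (1.25:ℝ) * (δ / 1.25) = δ := by ring
      linarith
    have h1 : -t₀ ≤ Δ/2 := by
      have he : -t₀ = Δ*(ε-4*L)/(2*ε) := by
        rw [ht₀]
        field_simp
        ring
      rw [he, div_le_iff₀ (by linarith)]
      nlinarith
    have hσΔ : 0.4*Δ^2 ≤ σ^2 := by
      rw [hσ2]
      have hde : Δ ≤ Δ/ε := by
        rw [le_div_iff₀ hε0]; nlinarith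
      have h5 : Δ^2 ≤ (Δ/ε)^2 := by nlinarith [div_pos hΔ hε0]
      nlinarith
    have hsqrt : 1.575*Δ ≤ Real.sqrt (2*π*σ^2) := by
      rw [show (1.575:ℝ)*Δ = Real.sqrt ((1.575*Δ)^2) from
        (Real.sqrt_sq (by positivity)).symm]
      apply Real.sqrt_le_sqrt
      nlinarith [Real.pi_gt_d6, sq_nonneg Δ]
    have hsqrtpos : (0:ℝ) < 1.575*Δ := by linarith
    have hinv : (Real.sqrt (2*π*σ^2))⁻¹ ≤ (1.575*Δ)⁻¹ :=
      inv_anti₀ hsqrtpos hsqrt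
    have h2 : (-t₀) * (Real.sqrt (2*π*σ^2))⁻¹ ≤ (Δ/2) * (1.575*Δ)⁻¹ := by
      apply mul_le_mul h1 hinv (by positivity) (by linarith)
    have h3 : (Δ/2) * (1.575*Δ)⁻¹ = 1/3.15 := by
      rw [mul_inv_eq_iff_eq_mul₀ (by positivity)]
      field_simp
      ring
    rw [h3] at h2
    have h4 : (1:ℝ)/2 + 1/3.15 ≤ 0.9375 := by norm_num
    linarith


set_option maxHeartbeats 1000000 in
/-- The Gaussian mechanism with σ = (Δ₂/ε)·√(2·ln(1.25/δ)) is (ε, δ)-DP. -/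
theorem gaussian_mechanism_adp {D : Type*}
    (N : D → D → Prop) (ε δ Δ : ℝ)
    (hε : ε ∈ Set.Ioo (0 : ℝ) 1) (hδ : δ ∈ Set.Ioo (0 : ℝ) 1) (hΔ : 0 < Δ)
    (f : D → ℝ)
    (hsens : ∀ d₁ d₂, N d₁ d₂ → |f d₁ - f d₂| ≤ Δ)
    (σ : ℝ) (hσ : σ = (Δ / ε) * Real.sqrt (2 * Real.log (1.25 / δ))) :
    ADP N ε δ (fun d => gaussianReal (f d) (Real.toNNReal (σ ^ 2))) := by
  intro d₁ d₂ hN S hS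
  have hε0 : 0 < ε := hε.1
  have hδ0 : 0 < δ := hδ.1
  have hδ1 : δ < 1 := hδ.2
  have hlog : 0 < Real.log (1.25 / δ) :=
    Real.log_pos ((one_lt_div hδ0).mpr (by linarith))
  have hσpos : 0 < σ := by rw [hσ]; positivity
  have hvc : ((Real.toNNReal (σ ^ 2) : ℝ≥0) : ℝ) = σ^2 := Real.coe_toNNReal _ (sq_nonneg σ)
  have hvpos : (0:ℝ) < ((Real.toNNReal (σ ^ 2) : ℝ≥0) : ℝ) := by rw [hvc]; positivity
  have hv : Real.toNNReal (σ ^ 2) ≠ 0 := by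
    intro h
    rw [h] at hvpos
    simp at hvpos
  have ha : |f d₁ - f d₂| ≤ Δ := hsens d₁ d₂ hN
  set G : Set ℝ :=
    {x | 2*(f d₁ - f d₂)*(x - f d₁) + (f d₁ - f d₂)^2 ≤ 2*σ^2*ε} with hGdef
  have hGm : MeasurableSet G := measurableSet_le (by fun_prop) measurable_const
  show gaussianReal (f d₁) (Real.toNNReal (σ ^ 2)) S
      ≤ ENNReal.ofReal (Real.exp ε) * gaussianReal (f d₂) (Real.toNNReal (σ ^ 2)) S
        + ENNReal.ofReal δ
  have hgood : gaussianReal (f d₁) (Real.toNNReal (σ ^ 2)) (S ∩ G)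
      ≤ ENNReal.ofReal (Real.exp ε) * gaussianReal (f d₂) (Real.toNNReal (σ ^ 2)) S := by
    calc gaussianReal (f d₁) (Real.toNNReal (σ ^ 2)) (S ∩ G)
        = ∫⁻ x in S ∩ G, gaussianPDF (f d₁) (Real.toNNReal (σ ^ 2)) x :=
          gaussianReal_apply _ hv _
      _ ≤ ∫⁻ x in S ∩ G,
            ENNReal.ofReal (Real.exp ε) * gaussianPDF (f d₂) (Real.toNNReal (σ ^ 2)) x := by
          refine setLIntegral_mono ((measurable_gaussianPDF _ _).const_mul _) fun x hx => ?_
          rw [gaussianPDF, gaussianPDF, ← ENNReal.ofReal_mul (Real.exp_nonneg _)]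
          refine ENNReal.ofReal_le_ofReal (pdf_le hvpos (f d₁) (f d₂) ε x ?_)
          rw [hvc]
          have h2 := hx.2
          rw [hGdef] at h2
          simp only [Set.mem_setOf_eq] at h2
          nlinarith [h2]
      _ = ENNReal.ofReal (Real.exp ε)
            * ∫⁻ x in S ∩ G, gaussianPDF (f d₂) (Real.toNNReal (σ ^ 2)) x :=
          lintegral_const_mul _ (measurable_gaussianPDF _ _)
      _ = ENNReal.ofReal (Real.exp ε)
            * gaussianReal (f d₂) (Real.toNNReal (σ ^ 2)) (S ∩ G) := by
          rw [gaussianReal_apply _ hv]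
      _ ≤ ENNReal.ofReal (Real.exp ε) * gaussianReal (f d₂) (Real.toNNReal (σ ^ 2)) S :=
          mul_le_mul_right (measure_mono Set.inter_subset_left) _
  have hbad : gaussianReal (f d₁) (Real.toNNReal (σ ^ 2)) Gᶜ ≤ ENNReal.ofReal δ := by
    have hGc : Gᶜ =
        {x : ℝ | 2*σ^2*ε < 2*(f d₁ - f d₂)*(x - f d₁) + (f d₁ - f d₂)^2} := by
      rw [hGdef]
      ext x
      simp only [Set.mem_compl_iff, Set.mem_setOf_eq, not_le]
    have hmeas : MeasurableSet
        {x : ℝ | 2*σ^2*ε < 2*(f d₁ - f d₂)*(x - f d₁) + (f d₁ - f d₂)^2} :=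
      measurableSet_lt measurable_const (by fun_prop)
    rw [hGc, aux_shift (f d₁) _ hmeas]
    have hpre : (fun y : ℝ => y + f d₁) ⁻¹'
          {x : ℝ | 2*σ^2*ε < 2*(f d₁ - f d₂)*(x - f d₁) + (f d₁ - f d₂)^2}
        = {y : ℝ | 2*σ^2*ε < 2*(f d₁ - f d₂)*y + (f d₁ - f d₂)^2} := by
      ext y
      simp only [Set.mem_preimage, Set.mem_setOf_eq, add_sub_cancel_right]
    rw [hpre]
    exact aux_bad hε hδ hΔ ha hσ
  calc gaussianReal (f d₁) (Real.toNNReal (σ ^ 2)) S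
      ≤ gaussianReal (f d₁) (Real.toNNReal (σ ^ 2)) (S ∩ G)
        + gaussianReal (f d₁) (Real.toNNReal (σ ^ 2)) Gᶜ := by
        refine le_trans (measure_mono fun x hx => ?_) (measure_union_le _ _)
        by_cases hxG : x ∈ G
        · exact Or.inl ⟨hx, hxG⟩
        · exact Or.inr hxG
    _ ≤ ENNReal.ofReal (Real.exp ε) * gaussianReal (f d₂) (Real.toNNReal (σ ^ 2)) S
        + ENNReal.ofReal δ := add_le_add hgood hbad
end

section
/- For two Gaussian distributions N(μ1, σ²) and N(μ2, σ²) on ℝ with |μ1 − μ2| ≤ Δ, the set of points x where the density ratio exceeds e^ε, i.e., |log(p1(x)/p2(x))| > ε, is contained in a tail region whose probability under N(μ1, σ²) is at most δ when σ ≥ (Δ/ε)·√(2·ln(1.25/δ)) and ε ∈ (0,1). -/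
open MeasureTheory ProbabilityTheory Real

/-- Density of the Gaussian N(μ, σ²) on ℝ. -/
noncomputable def gaussPdf (μ σ x : ℝ) : ℝ :=
  (1 / (σ * Real.sqrt (2 * Real.pi))) * Real.exp (-(x - μ) ^ 2 / (2 * σ ^ 2))

open Set
open scoped NNReal ENNReal

set_option maxHeartbeats 1000000

section AuxGauss

variable {v : ℝ≥0}

lemma gauss_int_Iic_zero (hv : v ≠ 0) :
    ∫ x in Iic (0:ℝ), gaussianPDFReal 0 v x = 1/2 := by
  have hint := integrable_gaussianPDFReal 0 v
  have hsym : ∫ x in Iic (0:ℝ), gaussianPDFReal 0 v x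
      = ∫ x in Ioi (0:ℝ), gaussianPDFReal 0 v x := by
    have := integral_comp_neg_Iic (0:ℝ) (gaussianPDFReal 0 v)
    rw [neg_zero] at this
    rw [← this]
    congr 1 with x
    simp [gaussianPDFReal, neg_sq]
  have htot : (∫ x in Iic (0:ℝ), gaussianPDFReal 0 v x)
      + ∫ x in Ioi (0:ℝ), gaussianPDFReal 0 v x = 1 := by
    rw [intervalIntegral.integral_Iic_add_Ioi hint.integrableOn hint.integrableOn]
    exact integral_gaussianPDFReal_eq_one 0 hv
  linarith [hsym, htot]

lemma gauss_int_Ici_zero (hv : v ≠ 0) :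
    ∫ x in Ici (0:ℝ), gaussianPDFReal 0 v x = 1/2 := by
  have hint := integrable_gaussianPDFReal 0 v
  have hsym : ∫ x in Iic (0:ℝ), gaussianPDFReal 0 v x
      = ∫ x in Ioi (0:ℝ), gaussianPDFReal 0 v x := by
    have := integral_comp_neg_Iic (0:ℝ) (gaussianPDFReal 0 v)
    rw [neg_zero] at this
    rw [← this]
    congr 1 with x
    simp [gaussianPDFReal, neg_sq]
  rw [integral_Ici_eq_integral_Ioi, ← hsym]
  exact gauss_int_Iic_zero hv

lemma gauss_meas_Ici_center (μ : ℝ) (hv : v ≠ 0) :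
    gaussianReal μ v (Ici μ) = ENNReal.ofReal (1/2) := by
  have hmap := gaussianReal_map_add_const (μ := 0) (v := v) μ
  rw [zero_add] at hmap
  rw [← hmap, Measure.map_apply (measurable_id'.add_const μ) measurableSet_Ici]
  have : (fun x : ℝ => x + μ) ⁻¹' Ici μ = Ici 0 := by
    ext x; simp [Set.mem_preimage]
  rw [this, gaussianReal_apply_eq_integral _ hv, gauss_int_Ici_zero hv]

lemma gauss_meas_Iic_center (μ : ℝ) (hv : v ≠ 0) :
    gaussianReal μ v (Iic μ) = ENNReal.ofReal (1/2) := by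
  have hmap := gaussianReal_map_add_const (μ := 0) (v := v) μ
  rw [zero_add] at hmap
  rw [← hmap, Measure.map_apply (measurable_id'.add_const μ) measurableSet_Iic]
  have : (fun x : ℝ => x + μ) ⁻¹' Iic μ = Iic 0 := by
    ext x; simp [Set.mem_preimage]
  rw [this, gaussianReal_apply_eq_integral _ hv, gauss_int_Iic_zero hv]

lemma gauss_int_Ici_center (μ : ℝ) (hv : v ≠ 0) :
    ∫ x in Ici μ, gaussianPDFReal μ v x = 1/2 := by
  have h := gauss_meas_Ici_center μ hv
  rw [gaussianReal_apply_eq_integral _ hv] at h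
  have hnn : (0:ℝ) ≤ ∫ x in Ici μ, gaussianPDFReal μ v x :=
    setIntegral_nonneg measurableSet_Ici (fun x _ => gaussianPDFReal_nonneg _ _ _)
  exact (ENNReal.ofReal_eq_ofReal_iff hnn (by norm_num)).mp h

lemma gauss_int_Iic_center (μ : ℝ) (hv : v ≠ 0) :
    ∫ x in Iic μ, gaussianPDFReal μ v x = 1/2 := by
  have h := gauss_meas_Iic_center μ hv
  rw [gaussianReal_apply_eq_integral _ hv] at h
  have hnn : (0:ℝ) ≤ ∫ x in Iic μ, gaussianPDFReal μ v x :=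
    setIntegral_nonneg measurableSet_Iic (fun x _ => gaussianPDFReal_nonneg _ _ _)
  exact (ENNReal.ofReal_eq_ofReal_iff hnn (by norm_num)).mp h

lemma gauss_tail_right (μ t : ℝ) (hv : v ≠ 0) (ht : 0 ≤ t) :
    gaussianReal μ v (Ici (μ + t)) ≤ ENNReal.ofReal ((1/2) * Real.exp (-t^2/(2*v))) := by
  have hvpos : (0:ℝ) < v := lt_of_le_of_ne v.coe_nonneg (by exact_mod_cast (Ne.symm hv))
  rw [gaussianReal_apply_eq_integral _ hv]
  apply ENNReal.ofReal_le_ofReal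
  have hptwise : ∀ x ∈ Ici (μ + t),
      gaussianPDFReal μ v x ≤ Real.exp (-t^2/(2*(v:ℝ))) * gaussianPDFReal (μ + t) v x := by
    intro x hx
    simp only [mem_Ici] at hx
    have hC : (0:ℝ) ≤ (Real.sqrt (2*π*(v:ℝ)))⁻¹ := by positivity
    have h2v : (0:ℝ) < 2*(v:ℝ) := by linarith
    have hkey : rexp (-(x - μ)^2/(2*(v:ℝ)))
        ≤ rexp (-t^2/(2*(v:ℝ))) * rexp (-(x - (μ+t))^2/(2*(v:ℝ))) := by
      rw [← Real.exp_add]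
      apply Real.exp_le_exp.mpr
      rw [← add_div, div_le_div_iff₀ h2v h2v]
      nlinarith [mul_nonneg ht (by linarith : (0:ℝ) ≤ x - (μ + t))]
    unfold gaussianPDFReal
    nlinarith [mul_le_mul_of_nonneg_left hkey hC]
  calc ∫ x in Ici (μ + t), gaussianPDFReal μ v x
      ≤ ∫ x in Ici (μ + t), Real.exp (-t^2/(2*(v:ℝ))) * gaussianPDFReal (μ + t) v x := by
        apply setIntegral_mono_on
          (integrable_gaussianPDFReal μ v).integrableOn
          (((integrable_gaussianPDFReal (μ+t) v).const_mul _).integrableOn)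
          measurableSet_Ici hptwise
    _ = Real.exp (-t^2/(2*(v:ℝ))) * ∫ x in Ici (μ + t), gaussianPDFReal (μ + t) v x :=
        integral_const_mul _ _
    _ = (1/2) * Real.exp (-t^2/(2*(v:ℝ))) := by
        rw [gauss_int_Ici_center (μ + t) hv]; ring

lemma gauss_tail_left (μ t : ℝ) (hv : v ≠ 0) (ht : 0 ≤ t) :
    gaussianReal μ v (Iic (μ - t)) ≤ ENNReal.ofReal ((1/2) * Real.exp (-t^2/(2*v))) := by
  have hvpos : (0:ℝ) < v := lt_of_le_of_ne v.coe_nonneg (by exact_mod_cast (Ne.symm hv))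
  rw [gaussianReal_apply_eq_integral _ hv]
  apply ENNReal.ofReal_le_ofReal
  have hptwise : ∀ x ∈ Iic (μ - t),
      gaussianPDFReal μ v x ≤ Real.exp (-t^2/(2*(v:ℝ))) * gaussianPDFReal (μ - t) v x := by
    intro x hx
    simp only [mem_Iic] at hx
    have hC : (0:ℝ) ≤ (Real.sqrt (2*π*(v:ℝ)))⁻¹ := by positivity
    have h2v : (0:ℝ) < 2*(v:ℝ) := by linarith
    have hkey : rexp (-(x - μ)^2/(2*(v:ℝ)))
        ≤ rexp (-t^2/(2*(v:ℝ))) * rexp (-(x - (μ-t))^2/(2*(v:ℝ))) := by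
      rw [← Real.exp_add]
      apply Real.exp_le_exp.mpr
      rw [← add_div, div_le_div_iff₀ h2v h2v]
      nlinarith [mul_nonneg ht (by linarith : (0:ℝ) ≤ (μ - t) - x)]
    unfold gaussianPDFReal
    nlinarith [mul_le_mul_of_nonneg_left hkey hC]
  calc ∫ x in Iic (μ - t), gaussianPDFReal μ v x
      ≤ ∫ x in Iic (μ - t), Real.exp (-t^2/(2*(v:ℝ))) * gaussianPDFReal (μ - t) v x := by
        apply setIntegral_mono_on
          (integrable_gaussianPDFReal μ v).integrableOn
          (((integrable_gaussianPDFReal (μ-t) v).const_mul _).integrableOn)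
          measurableSet_Iic hptwise
    _ = Real.exp (-t^2/(2*(v:ℝ))) * ∫ x in Iic (μ - t), gaussianPDFReal (μ - t) v x :=
        integral_const_mul _ _
    _ = (1/2) * Real.exp (-t^2/(2*(v:ℝ))) := by
        rw [gauss_int_Iic_center (μ - t) hv]; ring

lemma gauss_pdf_le (μ : ℝ) (v : ℝ≥0) (x : ℝ) :
    gaussianPDFReal μ v x ≤ (Real.sqrt (2*π*v))⁻¹ := by
  unfold gaussianPDFReal
  have h1 : Real.exp (-(x - μ)^2/(2*(v:ℝ))) ≤ 1 := by
    rw [Real.exp_le_one_iff]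
    apply div_nonpos_of_nonpos_of_nonneg (neg_nonpos.mpr (sq_nonneg _))
    positivity
  have hC : (0:ℝ) ≤ (Real.sqrt (2*π*(v:ℝ)))⁻¹ := by positivity
  nlinarith [mul_le_mul_of_nonneg_left h1 hC]

lemma gauss_interval_le (μ a b : ℝ) (hv : v ≠ 0) (hab : a ≤ b) :
    gaussianReal μ v (Ioc a b) ≤ ENNReal.ofReal ((b - a) * (Real.sqrt (2*π*v))⁻¹) := by
  rw [gaussianReal_apply_eq_integral _ hv]
  apply ENNReal.ofReal_le_ofReal
  calc ∫ x in Ioc a b, gaussianPDFReal μ v x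
      ≤ ∫ _x in Ioc a b, (Real.sqrt (2*π*(v:ℝ)))⁻¹ := by
        apply setIntegral_mono_on
          (integrable_gaussianPDFReal μ v).integrableOn
          (integrableOn_const measure_Ioc_lt_top.ne)
          measurableSet_Ioc (fun x _ => gauss_pdf_le μ v x)
    _ = (b - a) * (Real.sqrt (2*π*(v:ℝ)))⁻¹ := by
        rw [setIntegral_const, Real.volume_real_Ioc_of_le hab, smul_eq_mul]

lemma gauss_interval_le' (μ a b : ℝ) (hv : v ≠ 0) (hab : a ≤ b) :
    gaussianReal μ v (Ico a b) ≤ ENNReal.ofReal ((b - a) * (Real.sqrt (2*π*v))⁻¹) := by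
  rw [gaussianReal_apply_eq_integral _ hv]
  apply ENNReal.ofReal_le_ofReal
  calc ∫ x in Ico a b, gaussianPDFReal μ v x
      ≤ ∫ _x in Ico a b, (Real.sqrt (2*π*(v:ℝ)))⁻¹ := by
        apply setIntegral_mono_on
          (integrable_gaussianPDFReal μ v).integrableOn
          (integrableOn_const measure_Ico_lt_top.ne)
          measurableSet_Ico (fun x _ => gauss_pdf_le μ v x)
    _ = (b - a) * (Real.sqrt (2*π*(v:ℝ)))⁻¹ := by
        rw [setIntegral_const, Real.volume_real_Ico_of_le hab, smul_eq_mul]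

lemma gauss_mid_right (μ r : ℝ) (hv : v ≠ 0) (hr : 0 ≤ r) :
    gaussianReal μ v (Ici (μ - r)) ≤
      ENNReal.ofReal (1/2 + r * (Real.sqrt (2*π*v))⁻¹) := by
  have hsplit : Ici (μ - r) = Ico (μ - r) μ ∪ Ici μ :=
    (Ico_union_Ici_eq_Ici (by linarith)).symm
  have h1 : gaussianReal μ v (Ico (μ - r) μ)
      ≤ ENNReal.ofReal (r * (Real.sqrt (2*π*v))⁻¹) := by
    have := gauss_interval_le' μ (μ - r) μ hv (by linarith)
    rwa [show μ - (μ - r) = r by ring] at this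
  calc gaussianReal μ v (Ici (μ - r))
      ≤ gaussianReal μ v (Ico (μ - r) μ) + gaussianReal μ v (Ici μ) := by
        rw [hsplit]; exact measure_union_le _ _
    _ ≤ ENNReal.ofReal (r * (Real.sqrt (2*π*v))⁻¹) + ENNReal.ofReal (1/2) := by
        exact add_le_add h1 (le_of_eq (gauss_meas_Ici_center μ hv))
    _ ≤ ENNReal.ofReal (1/2 + r * (Real.sqrt (2*π*v))⁻¹) := by
        rw [← ENNReal.ofReal_add (by positivity) (by norm_num)]
        apply ENNReal.ofReal_le_ofReal
        linarith

lemma gauss_mid_left (μ r : ℝ) (hv : v ≠ 0) (hr : 0 ≤ r) :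
    gaussianReal μ v (Iic (μ + r)) ≤
      ENNReal.ofReal (1/2 + r * (Real.sqrt (2*π*v))⁻¹) := by
  have hsplit : Iic (μ + r) = Iic μ ∪ Ioc μ (μ + r) :=
    (Iic_union_Ioc_eq_Iic (by linarith)).symm
  have h1 : gaussianReal μ v (Ioc μ (μ + r))
      ≤ ENNReal.ofReal (r * (Real.sqrt (2*π*v))⁻¹) := by
    have := gauss_interval_le μ μ (μ + r) hv (by linarith)
    rwa [show (μ + r) - μ = r by ring] at this
  calc gaussianReal μ v (Iic (μ + r))
      ≤ gaussianReal μ v (Iic μ) + gaussianReal μ v (Ioc μ (μ + r)) := by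
        rw [hsplit]; exact measure_union_le _ _
    _ ≤ ENNReal.ofReal (1/2) + ENNReal.ofReal (r * (Real.sqrt (2*π*v))⁻¹) := by
        exact add_le_add (le_of_eq (gauss_meas_Iic_center μ hv)) h1
    _ ≤ ENNReal.ofReal (1/2 + r * (Real.sqrt (2*π*v))⁻¹) := by
        rw [← ENNReal.ofReal_add (by norm_num) (by positivity)]

end AuxGauss

lemma num_case1 (ε δ u : ℝ) (hε : 0 < ε) (hε1 : ε < 1) (hδ : 0 < δ) (hδ1 : δ < 1)
    (hu : Real.sqrt (2 * Real.log (1.25/δ)) ≤ u) (hupos : 0 < u)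
    (hs : 0 ≤ u - ε/(2*u)) :
    (1/2) * Real.exp (-(u - ε/(2*u))^2/2) + (1/2) * Real.exp (-(u + ε/(2*u))^2/2) ≤ δ := by
  set L := Real.log (1.25/δ) with hL
  have hLpos : 0 < L := Real.log_pos (by rw [lt_div_iff₀ hδ]; linarith)
  have hc2 : Real.sqrt (2*L)^2 = 2*L := Real.sq_sqrt (by linarith)
  have hu2 : 2*L ≤ u^2 := by nlinarith [Real.sqrt_nonneg (2*L)]
  have hune : u ≠ 0 := ne_of_gt hupos
  have hsm : (u - ε/(2*u))^2 = u^2 - ε + (ε/(2*u))^2 := by field_simp; ring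
  have hsp : (u + ε/(2*u))^2 = u^2 + ε + (ε/(2*u))^2 := by field_simp; ring
  have hexpL : Real.exp (-L) = δ/1.25 := by
    rw [Real.exp_neg, hL, Real.exp_log (by positivity), inv_div]
  have he1 : Real.exp (-(u - ε/(2*u))^2/2) ≤ Real.exp (ε/2) * (δ/1.25) := by
    rw [← hexpL, ← Real.exp_add]
    apply Real.exp_le_exp.mpr
    nlinarith [sq_nonneg (ε/(2*u))]
  have he2 : Real.exp (-(u + ε/(2*u))^2/2) ≤ Real.exp (-(ε/2)) * (δ/1.25) := by
    rw [← hexpL, ← Real.exp_add]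
    apply Real.exp_le_exp.mpr
    nlinarith [sq_nonneg (ε/(2*u))]
  set E := Real.exp (ε/2) with hE
  set F := Real.exp (-(ε/2)) with hF
  have hEF : E * F = 1 := by rw [hE, hF, ← Real.exp_add]; simp
  have hE1 : 1 ≤ E := Real.one_le_exp (by linarith)
  have hFpos : 0 < F := Real.exp_pos _
  have hEsq : E * E = Real.exp ε := by rw [hE, ← Real.exp_add]; ring_nf
  have hexpone : Real.exp 1 < 2.71829 := lt_trans Real.exp_one_lt_d9 (by norm_num)
  have hEe : Real.exp ε ≤ Real.exp 1 := Real.exp_le_exp.mpr (by linarith)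
  have hEE : E * E < 2.71829 := by
    rw [hEsq]; linarith
  have hE165 : E ≤ 1.65 := by nlinarith [hEE, hE1]
  have hEFsum : E + F ≤ 2.5 := by nlinarith [mul_nonneg (sub_nonneg.mpr hE1) (sub_nonneg.mpr hE165)]
  have hprod : (δ/1.25) * (E + F) ≤ (δ/1.25) * 2.5 :=
    mul_le_mul_of_nonneg_left hEFsum (by positivity)
  have h1 : δ/1.25 * (E+F) = E * (δ/1.25) + F * (δ/1.25) := by ring
  have h2 : δ/1.25 * 2.5 = 2 * δ := by ring
  linarith

lemma num_case2 (ε δ u : ℝ) (hε : 0 < ε) (hε1 : ε < 1) (hδ : 0 < δ) (hδ1 : δ < 1)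
    (hu : Real.sqrt (2 * Real.log (1.25/δ)) ≤ u) (hupos : 0 < u)
    (hs : u - ε/(2*u) < 0) :
    (1/2 + (-(u - ε/(2*u))) * (Real.sqrt (2*π))⁻¹)
      + (1/2) * Real.exp (-(u + ε/(2*u))^2/2) ≤ δ := by
  set L := Real.log (1.25/δ) with hL
  have hLpos : 0 < L := Real.log_pos (by rw [lt_div_iff₀ hδ]; linarith)
  have hc2 : Real.sqrt (2*L)^2 = 2*L := Real.sq_sqrt (by linarith)
  have hu2 : 2*L ≤ u^2 := by nlinarith [Real.sqrt_nonneg (2*L)]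
  have hune : u ≠ 0 := ne_of_gt hupos
  -- u^2 < ε/2
  have husmall : 2 * u^2 < ε := by
    have := hs
    rw [sub_neg] at this
    rw [lt_div_iff₀ (by linarith : (0:ℝ) < 2*u)] at this
    nlinarith
  have hL4 : L < 1/4 := by nlinarith
  -- L ≥ 0.2
  have hlog08 : Real.log 0.8 ≤ -(0.2) := by
    have := Real.log_le_sub_one_of_pos (by norm_num : (0:ℝ) < 0.8)
    linarith
  have hlog125 : (0.2:ℝ) ≤ Real.log 1.25 := by
    have h8 : (1.25:ℝ) = (0.8)⁻¹ := by norm_num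
    rw [h8, Real.log_inv]
    linarith
  have hL02 : (0.2:ℝ) ≤ L := by
    have : Real.log 1.25 ≤ L := by
      rw [hL]
      apply Real.log_le_log (by norm_num)
      rw [le_div_iff₀ hδ]; nlinarith
    linarith
  have hu63 : (0.63:ℝ) ≤ u := by nlinarith
  -- -s₋ ≤ 0.17
  have hsm17 : ε/(2*u) - u ≤ 0.17 := by
    rw [sub_le_iff_le_add, div_le_iff₀ (by linarith : (0:ℝ) < 2*u)]
    nlinarith
  -- sqrt(2π) ≥ 2.5
  have hpi : (3.141592:ℝ) ≤ π := by linarith [Real.pi_gt_d6]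
  have hsqrt2pi : (2.5:ℝ) ≤ Real.sqrt (2*π) := by
    rw [show (2.5:ℝ) = Real.sqrt (2.5^2) from (Real.sqrt_sq (by norm_num)).symm]
    apply Real.sqrt_le_sqrt
    nlinarith
  have hinv : (Real.sqrt (2*π))⁻¹ ≤ 0.4 := by
    rw [inv_le_comm₀ (by linarith) (by norm_num)]
    linarith
  have hterm1 : (-(u - ε/(2*u))) * (Real.sqrt (2*π))⁻¹ ≤ 0.068 := by
    have h1 : (0:ℝ) ≤ -(u - ε/(2*u)) := by linarith
    have h2 : -(u - ε/(2*u)) ≤ 0.17 := by linarith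
    calc (-(u - ε/(2*u))) * (Real.sqrt (2*π))⁻¹ ≤ 0.17 * 0.4 := by
          apply mul_le_mul h2 hinv (by positivity) (by norm_num)
      _ = 0.068 := by norm_num
  -- term2
  have hsp : (u + ε/(2*u))^2 = u^2 + ε + (ε/(2*u))^2 := by field_simp; ring
  have hsp12 : (1.2:ℝ) ≤ (u + ε/(2*u))^2 := by nlinarith [sq_nonneg (ε/(2*u))]
  have hexp06 : Real.exp (-(u + ε/(2*u))^2/2) ≤ Real.exp (-(0.6)) :=
    Real.exp_le_exp.mpr (by linarith)
  have hexp06' : Real.exp (-(0.6:ℝ)) ≤ 0.625 := by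
    rw [Real.exp_neg, inv_le_comm₀ (Real.exp_pos _) (by norm_num)]
    have := Real.add_one_le_exp (0.6:ℝ)
    linarith
  -- δ lower bound
  have hexphalf : Real.exp (1/2) ≤ 1.6488 := by
    have h : Real.exp (1/2) * Real.exp (1/2) = Real.exp 1 := by
      rw [← Real.exp_add]; norm_num
    have hexpone : Real.exp 1 < 2.71829 := lt_trans Real.exp_one_lt_d9 (by norm_num)
    nlinarith [Real.exp_pos (1/2:ℝ), hexpone, h]
  have hexpq : Real.exp (1/4) ≤ 1.2841 := by
    have h : Real.exp (1/4) * Real.exp (1/4) = Real.exp (1/2) := by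
      rw [← Real.exp_add]; norm_num
    nlinarith [Real.exp_pos (1/4:ℝ)]
  have hdlow : (0.973:ℝ) ≤ δ := by
    have h1 : Real.exp L ≤ Real.exp (1/4) := Real.exp_le_exp.mpr (by linarith)
    have h2 : Real.exp L = 1.25/δ := by rw [hL, Real.exp_log (by positivity)]
    rw [h2, div_le_iff₀ hδ] at h1
    nlinarith
  linarith

section AuxGauss2

lemma gauss_two_tails {v : ℝ≥0} (μ : ℝ) (hv : v ≠ 0) (σ sm sp : ℝ)
    (hσ : 0 < σ) (hvr : (v:ℝ) = σ^2) (hsp : 0 ≤ sp) (B : Set ℝ)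
    (hB : B ⊆ Ici (μ + σ*sm) ∪ Iic (μ - σ*sp) ∨ B ⊆ Ici (μ + σ*sp) ∪ Iic (μ - σ*sm)) :
    gaussianReal μ v B ≤ ENNReal.ofReal
      ((if 0 ≤ sm then (1/2) * Real.exp (-sm^2/2)
        else 1/2 + (-sm) * (Real.sqrt (2*π))⁻¹) + (1/2) * Real.exp (-sp^2/2)) := by
  have harg : ∀ s : ℝ, -(σ*s)^2/(2*(v:ℝ)) = -s^2/2 := by
    intro s; rw [hvr]; field_simp
  have hsqrt : Real.sqrt (2*π*(v:ℝ)) = σ * Real.sqrt (2*π) := by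
    rw [hvr, show (2*π*σ^2 : ℝ) = σ^2*(2*π) from by ring, Real.sqrt_mul (sq_nonneg σ),
      Real.sqrt_sq hσ.le]
  have hsqpos : (0:ℝ) < Real.sqrt (2*π) := Real.sqrt_pos.mpr (by positivity)
  have hmidconv : ∀ s : ℝ, σ * s * (Real.sqrt (2*π*(v:ℝ)))⁻¹ = s * (Real.sqrt (2*π))⁻¹ := by
    intro s; rw [hsqrt]; field_simp
  have hEm_nonneg : 0 ≤ (if 0 ≤ sm then (1/2) * Real.exp (-sm^2/2)
      else 1/2 + (-sm) * (Real.sqrt (2*π))⁻¹) := by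
    split_ifs with h
    · positivity
    · have : 0 ≤ -sm := by linarith
      positivity
  -- bound for the sm-side set, both orientations
  have hsm_right : gaussianReal μ v (Ici (μ + σ*sm)) ≤ ENNReal.ofReal
      (if 0 ≤ sm then (1/2) * Real.exp (-sm^2/2)
        else 1/2 + (-sm) * (Real.sqrt (2*π))⁻¹) := by
    split_ifs with h
    · have := gauss_tail_right μ (σ*sm) hv (by positivity)
      rwa [harg] at this
    · have hr : 0 ≤ σ * (-sm) := by nlinarith
      have := gauss_mid_right μ (σ*(-sm)) hv hr
      rw [hmidconv] at this
      rwa [show μ - σ * -sm = μ + σ * sm from by ring] at this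
  have hsm_left : gaussianReal μ v (Iic (μ - σ*sm)) ≤ ENNReal.ofReal
      (if 0 ≤ sm then (1/2) * Real.exp (-sm^2/2)
        else 1/2 + (-sm) * (Real.sqrt (2*π))⁻¹) := by
    split_ifs with h
    · have := gauss_tail_left μ (σ*sm) hv (by positivity)
      rwa [harg] at this
    · have hr : 0 ≤ σ * (-sm) := by nlinarith
      have := gauss_mid_left μ (σ*(-sm)) hv hr
      rw [hmidconv] at this
      rwa [show μ + σ * -sm = μ - σ * sm from by ring] at this
  have hsp_right : gaussianReal μ v (Ici (μ + σ*sp)) ≤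
      ENNReal.ofReal ((1/2) * Real.exp (-sp^2/2)) := by
    have := gauss_tail_right μ (σ*sp) hv (by positivity)
    rwa [harg] at this
  have hsp_left : gaussianReal μ v (Iic (μ - σ*sp)) ≤
      ENNReal.ofReal ((1/2) * Real.exp (-sp^2/2)) := by
    have := gauss_tail_left μ (σ*sp) hv (by positivity)
    rwa [harg] at this
  rw [ENNReal.ofReal_add hEm_nonneg (by positivity)]
  rcases hB with hB | hB
  · calc gaussianReal μ v B ≤ gaussianReal μ v (Ici (μ + σ*sm) ∪ Iic (μ - σ*sp)) :=
        measure_mono hB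
      _ ≤ gaussianReal μ v (Ici (μ + σ*sm)) + gaussianReal μ v (Iic (μ - σ*sp)) :=
        measure_union_le _ _
      _ ≤ _ := add_le_add hsm_right hsp_left
  · calc gaussianReal μ v B ≤ gaussianReal μ v (Ici (μ + σ*sp) ∪ Iic (μ - σ*sm)) :=
        measure_mono hB
      _ ≤ gaussianReal μ v (Ici (μ + σ*sp)) + gaussianReal μ v (Iic (μ - σ*sm)) :=
        measure_union_le _ _
      _ ≤ _ := by
        rw [add_comm (ENNReal.ofReal _)]
        exact add_le_add hsp_right hsm_left

/-- Privacy-loss tail bound for two Gaussians: the set of points where the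
absolute log-density ratio exceeds ε has probability at most δ under N(μ₁, σ²),
when σ ≥ (Δ/ε)·√(2·ln(1.25/δ)) and ε ∈ (0,1). -/
theorem gaussian_privacy_loss_tail (μ₁ μ₂ σ Δ ε δ : ℝ)
    (hΔ : 0 < Δ) (hμ : |μ₁ - μ₂| ≤ Δ)
    (hε : ε ∈ Set.Ioo (0 : ℝ) 1) (hδ : δ ∈ Set.Ioo (0 : ℝ) 1)
    (hσ : (Δ / ε) * Real.sqrt (2 * Real.log (1.25 / δ)) ≤ σ) :
    gaussianReal μ₁ (Real.toNNReal (σ ^ 2))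
        {x | ε < |Real.log (gaussPdf μ₁ σ x / gaussPdf μ₂ σ x)|} ≤
      ENNReal.ofReal δ := by
  obtain ⟨hε0, hε1⟩ := hε
  obtain ⟨hδ0, hδ1⟩ := hδ
  have hLpos : 0 < Real.log (1.25/δ) :=
    Real.log_pos (by rw [lt_div_iff₀ hδ0]; linarith)
  have hc0pos : 0 < Real.sqrt (2 * Real.log (1.25/δ)) :=
    Real.sqrt_pos.mpr (by linarith)
  have hσ0 : 0 < σ := lt_of_lt_of_le (by positivity) hσ
  set v : ℝ≥0 := Real.toNNReal (σ^2) with hvdef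
  have hvr : (v:ℝ) = σ^2 := Real.coe_toNNReal _ (sq_nonneg σ)
  have hvpos : (0:ℝ) < v := by rw [hvr]; positivity
  have hv : v ≠ 0 := by
    intro h; rw [h] at hvpos; simp at hvpos
  have hC : (0:ℝ) < 1 / (σ * Real.sqrt (2*π)) := by positivity
  have hlog : ∀ x, Real.log (gaussPdf μ₁ σ x / gaussPdf μ₂ σ x)
      = (2*(μ₁-μ₂)*(x-μ₁) + (μ₁-μ₂)^2) / (2*σ^2) := by
    intro x
    unfold gaussPdf
    rw [mul_div_mul_left _ _ (ne_of_gt hC), ← Real.exp_sub, Real.log_exp]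
    field_simp
    ring
  by_cases ha : μ₁ - μ₂ = 0
  · have hempty : {x | ε < |Real.log (gaussPdf μ₁ σ x / gaussPdf μ₂ σ x)|} = ∅ := by
      ext x
      simp only [Set.mem_setOf_eq, Set.mem_empty_iff_false, iff_false, not_lt]
      rw [hlog x, ha]
      norm_num
      linarith
    rw [hempty]
    simp
  · set a := μ₁ - μ₂ with hadef
    set A := |a| with hA
    have hApos : 0 < A := abs_pos.mpr ha
    have hAΔ : A ≤ Δ := hμ
    set u := ε * σ / A with hu
    have hupos : 0 < u := by positivity
    have hAne : A ≠ 0 := ne_of_gt hApos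
    have hσne : σ ≠ 0 := ne_of_gt hσ0
    have hεne : ε ≠ 0 := ne_of_gt hε0
    clear_value a A u
    have huge : Real.sqrt (2 * Real.log (1.25/δ)) ≤ u := by
      set c := Real.sqrt (2 * Real.log (1.25/δ)) with hc
      have h1 : Δ * c ≤ ε * σ := by
        rw [div_mul_eq_mul_div, div_le_iff₀ hε0] at hσ
        nlinarith
      rw [hu, le_div_iff₀ hApos]
      nlinarith
    have hsmA : σ * (u - ε/(2*u)) = ε*σ^2/A - A/2 := by
      rw [hu]; field_simp
    have hspA : σ * (u + ε/(2*u)) = ε*σ^2/A + A/2 := by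
      rw [hu]; field_simp
    have hspnn : 0 ≤ u + ε/(2*u) := by positivity
    have h2σ2 : (0:ℝ) < 2*σ^2 := by positivity
    have hsub : {x | ε < |Real.log (gaussPdf μ₁ σ x / gaussPdf μ₂ σ x)|} ⊆
          Set.Ici (μ₁ + σ*(u - ε/(2*u))) ∪ Set.Iic (μ₁ - σ*(u + ε/(2*u))) ∨
        {x | ε < |Real.log (gaussPdf μ₁ σ x / gaussPdf μ₂ σ x)|} ⊆
          Set.Ici (μ₁ + σ*(u + ε/(2*u))) ∪ Set.Iic (μ₁ - σ*(u - ε/(2*u))) := by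
      rcases lt_or_gt_of_ne ha with haneg | hapos
      · -- a < 0
        right
        intro x hx
        simp only [Set.mem_setOf_eq] at hx
        rw [hlog x] at hx
        rcases lt_abs.mp hx with h | h
        · -- (2a(x-μ₁)+a²)/(2σ²) > ε , a < 0 : x ≤ μ₁ - σ sm
          right
          simp only [Set.mem_Iic]
          rw [lt_div_iff₀ h2σ2] at h
          have hAa : A = -a := hA.trans (abs_of_neg haneg)
          rw [hsmA, hAa]
          have hdivle : ε*σ^2/(-a) ≤ μ₁ - x + (-a)/2 := by
            rw [div_le_iff₀ (show (0:ℝ) < -a by linarith)]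
            nlinarith
          linarith
        · -- -( ) > ε : x ≥ μ₁ + σ sp
          left
          simp only [Set.mem_Ici]
          rw [← neg_div, lt_div_iff₀ h2σ2] at h
          have hAa : A = -a := hA.trans (abs_of_neg haneg)
          rw [hspA, hAa]
          have hdivle : ε*σ^2/(-a) ≤ x - μ₁ - (-a)/2 := by
            rw [div_le_iff₀ (show (0:ℝ) < -a by linarith)]
            nlinarith
          linarith
      · -- a > 0
        left
        intro x hx
        simp only [Set.mem_setOf_eq] at hx
        rw [hlog x] at hx
        rcases lt_abs.mp hx with h | h
        · left
          simp only [Set.mem_Ici]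
          rw [lt_div_iff₀ h2σ2] at h
          have hAa : A = a := hA.trans (abs_of_pos hapos)
          rw [hsmA, hAa]
          have hdivle : ε*σ^2/a ≤ x - μ₁ + a/2 := by
            rw [div_le_iff₀ hapos]
            nlinarith
          linarith
        · right
          simp only [Set.mem_Iic]
          rw [← neg_div, lt_div_iff₀ h2σ2] at h
          have hAa : A = a := hA.trans (abs_of_pos hapos)
          rw [hspA, hAa]
          have hdivle : ε*σ^2/a ≤ μ₁ - x - a/2 := by
            rw [div_le_iff₀ hapos]
            nlinarith
          linarith
    have hmeas := gauss_two_tails μ₁ hv σ (u - ε/(2*u)) (u + ε/(2*u)) hσ0 hvr hspnn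
      _ hsub
    refine le_trans hmeas (ENNReal.ofReal_le_ofReal ?_)
    split_ifs with hscase
    · exact num_case1 ε δ u hε0 hε1 hδ0 hδ1 huge hupos hscase
    · exact num_case2 ε δ u hε0 hε1 hδ0 hδ1 huge hupos (by linarith)
end AuxGauss2
end
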